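/- arXiv:0705.3969 — 5 statements merged into one kernel-verified Lean document; each statement's English description precedes it below -/
import Mathlib

section
/- Let d ≥ 1 be an integer and H > 0 a real constant. Let (λ_j)_{j≥1} be a nondecreasing sequence of positive real numbers with λ_j → ∞. Assume that for every real λ ≥ 0 one has Σ_{j=1}^∞ (λ − λ_j)_+ ≥ (2/(d+2)) · H^{−1} · λ_1^{−d/2} · (λ − λ_1)_+^{1+d/2}. Then for every k ∈ ℕ, k ≥ 1, one has Σ_{j=1}^k (λ_j − λ_1) ≤ (d/(d+2)) · H^{2/d} · λ_1 · k^{1+2/d}. -/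
open Filter Finset

/-- Young-type inequality coming out of the Legendre transform computation. -/
lemma young_aux (d : ℕ) (hd : 1 ≤ d) (H L : ℝ) (hH : 0 < H) (hl : 0 < L)
    (k : ℕ) (t : ℝ) (ht : 0 ≤ t) :
    (k : ℝ) * t ≤ (2 / ((d : ℝ) + 2)) * H⁻¹ * L ^ (-(d : ℝ) / 2) * t ^ (1 + (d : ℝ) / 2)
      + ((d : ℝ) / ((d : ℝ) + 2)) * H ^ ((2 : ℝ) / d) * L * (k : ℝ) ^ (1 + 2 / (d : ℝ)) := by
  set D : ℝ := (d : ℝ) with hD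
  have hD0 : (0 : ℝ) < D := by rw [hD]; exact_mod_cast hd
  have hD0' : D ≠ 0 := ne_of_gt hD0
  have hD2 : (0 : ℝ) < D + 2 := by linarith
  have hD2' : D + 2 ≠ 0 := ne_of_gt hD2
  set w₁ : ℝ := 2 / (D + 2) with hw₁def
  set w₂ : ℝ := D / (D + 2) with hw₂def
  have hw : w₁ + w₂ = 1 := by rw [hw₁def, hw₂def, ← add_div, div_eq_one_iff_eq hD2']; ring
  have hp₁ : (0 : ℝ) ≤ H⁻¹ * L ^ (-D / 2) * t ^ (1 + D / 2) := by positivity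
  have hp₂ : (0 : ℝ) ≤ H ^ ((2 : ℝ) / D) * L * (k : ℝ) ^ (1 + 2 / D) := by positivity
  have key := Real.geom_mean_le_arith_mean2_weighted
    (by positivity : (0:ℝ) ≤ w₁) (by positivity : (0:ℝ) ≤ w₂) hp₁ hp₂ hw
  have e1 : (H⁻¹ * L ^ (-D / 2) * t ^ (1 + D / 2)) ^ w₁
      = (H ^ w₁)⁻¹ * L ^ (-D / 2 * w₁) * t := by
    rw [Real.mul_rpow (by positivity) (by positivity),
        Real.mul_rpow (by positivity) (by positivity),
        Real.inv_rpow hH.le, ← Real.rpow_mul hl.le, ← Real.rpow_mul ht,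
        show (1 + D / 2) * w₁ = 1 by rw [hw₁def]; field_simp; ring, Real.rpow_one]
  have e2 : (H ^ ((2 : ℝ) / D) * L * (k : ℝ) ^ (1 + 2 / D)) ^ w₂
      = H ^ ((2 : ℝ) / D * w₂) * L ^ w₂ * (k : ℝ) := by
    rw [Real.mul_rpow (by positivity) (by positivity),
        Real.mul_rpow (by positivity) (by positivity),
        ← Real.rpow_mul hH.le, ← Real.rpow_mul (Nat.cast_nonneg k),
        show (1 + 2 / D) * w₂ = 1 by rw [hw₂def]; field_simp, Real.rpow_one]
  have e3 : (H ^ w₁)⁻¹ * H ^ ((2 : ℝ) / D * w₂) = 1 := by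
    rw [← Real.rpow_neg hH.le, ← Real.rpow_add hH,
        show -w₁ + (2 : ℝ) / D * w₂ = 0 by rw [hw₁def, hw₂def]; field_simp; ring,
        Real.rpow_zero]
  have e4 : L ^ (-D / 2 * w₁) * L ^ w₂ = 1 := by
    rw [← Real.rpow_add hl,
        show -D / 2 * w₁ + w₂ = 0 by rw [hw₁def, hw₂def]; field_simp; ring,
        Real.rpow_zero]
  have eprod : (H⁻¹ * L ^ (-D / 2) * t ^ (1 + D / 2)) ^ w₁
      * (H ^ ((2 : ℝ) / D) * L * (k : ℝ) ^ (1 + 2 / D)) ^ w₂ = (k : ℝ) * t := by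
    rw [e1, e2]
    calc (H ^ w₁)⁻¹ * L ^ (-D / 2 * w₁) * t * (H ^ ((2 : ℝ) / D * w₂) * L ^ w₂ * (k : ℝ))
        = ((H ^ w₁)⁻¹ * H ^ ((2 : ℝ) / D * w₂)) * (L ^ (-D / 2 * w₁) * L ^ w₂)
            * ((k : ℝ) * t) := by ring
      _ = (k : ℝ) * t := by rw [e3, e4]; ring
  rw [eprod] at key
  calc (k : ℝ) * t ≤ w₁ * (H⁻¹ * L ^ (-D / 2) * t ^ (1 + D / 2))
        + w₂ * (H ^ ((2 : ℝ) / D) * L * (k : ℝ) ^ (1 + 2 / D)) := key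
    _ = 2 / (D + 2) * H⁻¹ * L ^ (-D / 2) * t ^ (1 + D / 2)
        + D / (D + 2) * H ^ ((2 : ℝ) / D) * L * (k : ℝ) ^ (1 + 2 / D) := by
          rw [hw₁def, hw₂def]; ring

/-- Legendre-transform deduction of the eigenvalue-sum bound from the Riesz-mean bound. -/
theorem stmt_0 (d : ℕ) (hd : 1 ≤ d) (H : ℝ) (hH : 0 < H)
    (lam : ℕ → ℝ) (hmono : Monotone lam) (hpos : ∀ j, 0 < lam j)
    (htend : Tendsto lam atTop atTop)
    (hbound : ∀ μ : ℝ, 0 ≤ μ →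
      (2 / ((d : ℝ) + 2)) * H⁻¹ * lam 0 ^ (-(d : ℝ) / 2) *
        (max (μ - lam 0) 0) ^ (1 + (d : ℝ) / 2) ≤ ∑' j, max (μ - lam j) 0)
    (k : ℕ) (hk : 1 ≤ k) :
    ∑ j ∈ Finset.range k, (lam j - lam 0) ≤
      ((d : ℝ) / ((d : ℝ) + 2)) * H ^ ((2 : ℝ) / d) * lam 0 * (k : ℝ) ^ (1 + 2 / (d : ℝ)) := by
  set μ := lam (k - 1) with hμdef
  have hμ0 : lam 0 ≤ μ := hmono (Nat.zero_le _)
  have ht : 0 ≤ μ - lam 0 := sub_nonneg.2 hμ0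
  have hsum_eq : (∑' j, max (μ - lam j) 0) = ∑ j ∈ Finset.range k, (μ - lam j) := by
    rw [tsum_eq_sum (s := Finset.range k) ?_]
    · refine Finset.sum_congr rfl fun j hj => ?_
      have hj' : j ≤ k - 1 := by have := Finset.mem_range.1 hj; omega
      exact max_eq_left (sub_nonneg.2 (hmono hj'))
    · intro j hj
      have hj' : k - 1 ≤ j := by have := Finset.mem_range.not.1 hj; omega
      exact max_eq_right (sub_nonpos.2 (hmono hj'))
  have hb := hbound μ (hpos (k - 1)).le
  rw [hsum_eq, max_eq_left ht] at hb
  have hsplit : ∑ j ∈ Finset.range k, (lam j - lam 0)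
      = (k : ℝ) * (μ - lam 0) - ∑ j ∈ Finset.range k, (μ - lam j) := by
    have h : ∑ j ∈ Finset.range k, (lam j - lam 0) + ∑ j ∈ Finset.range k, (μ - lam j)
        = ∑ j ∈ Finset.range k, (μ - lam 0) := by
      rw [← Finset.sum_add_distrib]
      exact Finset.sum_congr rfl fun _ _ => by ring
    rw [Finset.sum_const, Finset.card_range, nsmul_eq_mul] at h
    linarith
  have hyoung := young_aux d hd H (lam 0) hH (hpos 0) k (μ - lam 0) ht
  rw [hsplit]
  linarith
end

section
/- Let (λ_j)_{j≥1} be a nondecreasing sequence of positive real numbers with λ_j → ∞, and let f(λ) := Σ_{j=1}^∞ (λ − λ_j)_+ for λ > 0 (the sum is finite for each λ since λ_j → ∞). Then for every real p > 0, sup_{λ > 0} ( p·λ − f(λ) ) = (p − ⌊p⌋)·λ_{⌊p⌋+1} + Σ_{j=1}^{⌊p⌋} λ_j, where ⌊p⌋ denotes the integer part of p. In particular, for p = k a positive integer the supremum equals Σ_{j=1}^k λ_j. -/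
open Filter Finset

/-- Legendre transform of the Riesz mean `f(λ) = ∑_j (λ - λ_j)_+`. -/
theorem stmt_1 (lam : ℕ → ℝ) (hmono : Monotone lam) (hpos : ∀ j, 0 < lam j)
    (htend : Tendsto lam atTop atTop)
    (f : ℝ → ℝ) (hf : ∀ μ, f μ = ∑' j, max (μ - lam j) 0)
    (p : ℝ) (hp : 0 < p) :
    sSup {y : ℝ | ∃ μ : ℝ, 0 < μ ∧ y = p * μ - f μ} =
      (p - (⌊p⌋₊ : ℝ)) * lam ⌊p⌋₊ + ∑ j ∈ Finset.range ⌊p⌋₊, lam j := by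
  set n := ⌊p⌋₊ with hn
  have hnp : (n : ℝ) ≤ p := Nat.floor_le hp.le
  have hpn1 : p < n + 1 := Nat.lt_floor_add_one p
  have hsummable : ∀ μ : ℝ, Summable (fun j => max (μ - lam j) 0) := by
    intro μ
    obtain ⟨N, hN⟩ := eventually_atTop.mp (htend.eventually_ge_atTop μ)
    apply summable_of_ne_finset_zero (s := Finset.range N)
    intro j hj
    have hNj : N ≤ j := le_of_not_gt (by simpa using hj)
    exact max_eq_right (sub_nonpos.mpr (hN j hNj))
  have key : ∀ μ : ℝ, p * μ - f μ ≤ (p - n) * lam n + ∑ j ∈ Finset.range n, lam j := by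
    intro μ
    have h1 : ∑ j ∈ Finset.range n, (μ - lam j) ≤ ∑ j ∈ Finset.range n, max (μ - lam j) 0 :=
      Finset.sum_le_sum fun j _ => le_max_left _ _
    have h2 : (p - n) * (μ - lam n) ≤ max (μ - lam n) 0 := by
      rcases le_or_gt (lam n) μ with h | h
      · calc (p - n) * (μ - lam n) ≤ 1 * (μ - lam n) :=
              mul_le_mul_of_nonneg_right (by linarith) (by linarith)
          _ = μ - lam n := one_mul _
          _ ≤ max (μ - lam n) 0 := le_max_left _ _
      · have : (p - n) * (μ - lam n) ≤ 0 :=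
          mul_nonpos_of_nonneg_of_nonpos (by linarith) (by linarith)
        exact this.trans (le_max_right _ _)
    have h3 : ∑ j ∈ Finset.range (n + 1), max (μ - lam j) 0 ≤ f μ := by
      rw [hf]
      exact Summable.sum_le_tsum _ (fun j _ => le_max_right _ _) (hsummable μ)
    rw [Finset.sum_range_succ] at h3
    have hsumeq : ∑ j ∈ Finset.range n, (μ - lam j) =
        n * μ - ∑ j ∈ Finset.range n, lam j := by
      rw [Finset.sum_sub_distrib, Finset.sum_const, Finset.card_range, nsmul_eq_mul]
    linarith [h1, h2, h3, hsumeq]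
  have hfn : f (lam n) = (n : ℝ) * lam n - ∑ j ∈ Finset.range n, lam j := by
    rw [hf, tsum_eq_sum (s := Finset.range n) ?_]
    · rw [show ∑ j ∈ Finset.range n, max (lam n - lam j) 0
          = ∑ j ∈ Finset.range n, (lam n - lam j) from
        Finset.sum_congr rfl fun j hj =>
          max_eq_left (sub_nonneg.mpr (hmono (le_of_lt (Finset.mem_range.mp hj))))]
      rw [Finset.sum_sub_distrib, Finset.sum_const, Finset.card_range, nsmul_eq_mul]
    · intro j hj
      have hj' : n ≤ j := le_of_not_gt (by simpa using hj)
      exact max_eq_right (sub_nonpos.mpr (hmono hj'))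
  have hmem : (p - (n : ℝ)) * lam n + ∑ j ∈ Finset.range n, lam j ∈
      {y : ℝ | ∃ μ : ℝ, 0 < μ ∧ y = p * μ - f μ} := by
    exact ⟨lam n, hpos n, by rw [hfn]; ring⟩
  have hub : ∀ y ∈ {y : ℝ | ∃ μ : ℝ, 0 < μ ∧ y = p * μ - f μ},
      y ≤ (p - (n : ℝ)) * lam n + ∑ j ∈ Finset.range n, lam j := by
    rintro y ⟨μ, hμ, rfl⟩
    exact key μ
  exact le_antisymm (csSup_le ⟨_, hmem⟩ hub) (le_csSup ⟨_, hub⟩ hmem)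
end

section
/- Let d ≥ 1 be an integer, H > 0, k ≥ 1 an integer, and let 0 < λ_1 ≤ λ_2 ≤ … ≤ λ_{k+1} be real numbers. Assume that (2/(d+2)) · H^{−1} · λ_1^{−d/2} · (λ_{k+1} − λ_1)^{1+d/2} ≤ Σ_{j=1}^k (λ_{k+1} − λ_j). Then λ_{k+1} ≤ ( 1 + (1 + d/2)^{2/d} · H^{2/d} · k^{2/d} ) · λ_1. -/
open Finset

/-- First eigenvalue-ratio bound from the Riesz-mean inequality at `λ = λ_{k+1}`. -/
theorem stmt_3 (d : ℕ) (hd : 1 ≤ d) (H : ℝ) (hH : 0 < H) (k : ℕ) (hk : 1 ≤ k)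
    (lam : ℕ → ℝ) (hpos : 0 < lam 1)
    (hmono : ∀ i j, 1 ≤ i → i ≤ j → j ≤ k + 1 → lam i ≤ lam j)
    (hineq : (2 / ((d : ℝ) + 2)) * H⁻¹ * lam 1 ^ (-(d : ℝ) / 2) *
        (lam (k + 1) - lam 1) ^ (1 + (d : ℝ) / 2)
      ≤ ∑ j ∈ Finset.Icc 1 k, (lam (k + 1) - lam j)) :
    lam (k + 1) ≤
      (1 + (1 + (d : ℝ) / 2) ^ ((2 : ℝ) / d) * H ^ ((2 : ℝ) / d) * (k : ℝ) ^ ((2 : ℝ) / d)) *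
        lam 1 := by
  have hd' : (0:ℝ) < d := by exact_mod_cast hd
  have hk' : (0:ℝ) < k := by exact_mod_cast hk
  set D := lam (k + 1) - lam 1 with hDdef
  have hD0 : 0 ≤ D := sub_nonneg.2 (hmono 1 (k+1) le_rfl (by omega) le_rfl)
  have hX : 0 ≤ (1 + (d : ℝ) / 2) ^ ((2 : ℝ) / d) * H ^ ((2 : ℝ) / d) * (k : ℝ) ^ ((2 : ℝ) / d) := by
    positivity
  have hsum : ∑ j ∈ Finset.Icc 1 k, (lam (k + 1) - lam j) ≤ k * D := by
    calc ∑ j ∈ Finset.Icc 1 k, (lam (k + 1) - lam j)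
        ≤ ∑ j ∈ Finset.Icc 1 k, D := by
          apply Finset.sum_le_sum
          intro j hj
          simp only [Finset.mem_Icc] at hj
          have := hmono 1 j le_rfl hj.1 (by omega)
          simp only [hDdef]
          linarith
      _ = k * D := by
          rw [Finset.sum_const, Nat.card_Icc]
          simp [nsmul_eq_mul]
  rcases eq_or_lt_of_le hD0 with hD | hD
  · have h1 : lam (k + 1) = lam 1 := by
      have : lam (k+1) - lam 1 = 0 := hD.symm
      linarith
    rw [h1]
    nlinarith
  · -- D > 0 case
    set A : ℝ := lam 1 ^ ((d : ℝ) / 2) with hAdef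
    have hA : 0 < A := Real.rpow_pos_of_pos hpos _
    have hneg : lam 1 ^ (-(d : ℝ) / 2) = A⁻¹ := by
      rw [hAdef, ← Real.rpow_neg hpos.le]
      ring_nf
    have hDsplit : D ^ (1 + (d : ℝ) / 2) = D * D ^ ((d : ℝ) / 2) := by
      rw [Real.rpow_add hD, Real.rpow_one]
    set c : ℝ := 2 / ((d : ℝ) + 2) * H⁻¹ * A⁻¹ with hcdef
    have hc : 0 < c := by rw [hcdef]; positivity
    have hkey : c * D ^ ((d : ℝ) / 2) ≤ k := by
      have h2 := le_trans hineq hsum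
      rw [hneg, hDsplit] at h2
      have h2' : (c * D ^ ((d : ℝ) / 2)) * D ≤ (k : ℝ) * D := by
        calc (c * D ^ ((d : ℝ) / 2)) * D
            = 2 / ((d : ℝ) + 2) * H⁻¹ * A⁻¹ * (D * D ^ ((d : ℝ) / 2)) := by
              rw [hcdef]; ring
          _ ≤ (k : ℝ) * D := h2
      exact le_of_mul_le_mul_right h2' hD
    have hpowle : D ^ ((d : ℝ) / 2) ≤ (1 + (d : ℝ) / 2) * H * A * k := by
      have h3 : D ^ ((d : ℝ) / 2) ≤ (k : ℝ) / c := by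
        rw [le_div_iff₀ hc]
        calc D ^ ((d : ℝ) / 2) * c = c * D ^ ((d : ℝ) / 2) := by ring
          _ ≤ k := hkey
      have heq : (k : ℝ) / c = (1 + (d : ℝ) / 2) * H * A * k := by
        rw [hcdef]
        field_simp
        ring
      linarith
    have hmul : (0:ℝ) ≤ (1 + (d : ℝ) / 2) * H := by positivity
    have hr := Real.rpow_le_rpow (Real.rpow_nonneg hD0 _) hpowle
      (by positivity : (0:ℝ) ≤ 2 / d)
    have hL : (D ^ ((d : ℝ) / 2)) ^ ((2:ℝ)/d) = D := by
      rw [← Real.rpow_mul hD0, show (d:ℝ)/2 * (2/d) = 1 by field_simp, Real.rpow_one]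
    have hAL : A ^ ((2:ℝ)/d) = lam 1 := by
      rw [hAdef, ← Real.rpow_mul hpos.le, show (d:ℝ)/2 * (2/d) = 1 by field_simp,
        Real.rpow_one]
    have hR : ((1 + (d : ℝ) / 2) * H * A * k) ^ ((2:ℝ)/d)
        = (1 + (d : ℝ) / 2) ^ ((2:ℝ)/d) * H ^ ((2:ℝ)/d) * lam 1 * (k:ℝ) ^ ((2:ℝ)/d) := by
      rw [Real.mul_rpow (by positivity) hk'.le, Real.mul_rpow hmul hA.le,
        Real.mul_rpow (by positivity) hH.le, hAL]
    rw [hL, hR] at hr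
    have hfin : D ≤ (1 + (d : ℝ) / 2) ^ ((2:ℝ)/d) * H ^ ((2:ℝ)/d) * (k:ℝ) ^ ((2:ℝ)/d) * lam 1 := by
      calc D ≤ (1 + (d : ℝ) / 2) ^ ((2:ℝ)/d) * H ^ ((2:ℝ)/d) * lam 1 * (k:ℝ) ^ ((2:ℝ)/d) := hr
        _ = (1 + (d : ℝ) / 2) ^ ((2:ℝ)/d) * H ^ ((2:ℝ)/d) * (k:ℝ) ^ ((2:ℝ)/d) * lam 1 := by ring
    have hexp : (1 + (1 + (d : ℝ) / 2) ^ ((2 : ℝ) / d) * H ^ ((2 : ℝ) / d) * (k : ℝ) ^ ((2 : ℝ) / d)) * lam 1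
        = lam 1 + (1 + (d : ℝ) / 2) ^ ((2:ℝ)/d) * H ^ ((2:ℝ)/d) * (k:ℝ) ^ ((2:ℝ)/d) * lam 1 := by
      ring
    linarith
end

section
/- Let d > 0 be a real number, k ≥ 1 an integer, and let 0 < λ_1 ≤ λ_2 ≤ … ≤ λ_{k+1} be real numbers with λ_j < λ_{k+1} for all 1 ≤ j ≤ k, satisfying the Yang inequality Σ_{j=1}^k (λ_{k+1} − λ_j)·(λ_{k+1} − (1 + 4/d)·λ_j) ≤ 0. Then (1/k) · Σ_{j=1}^k λ_j/(λ_{k+1} − λ_j) ≥ d/4. -/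
open Finset

/-- The quadratic Yang inequality implies the Hile–Protter inequality (HP). -/
theorem stmt_6 (d : ℝ) (hd : 0 < d) (k : ℕ) (hk : 1 ≤ k)
    (lam : ℕ → ℝ) (hpos : 0 < lam 1)
    (hmono : ∀ i j, 1 ≤ i → i ≤ j → j ≤ k + 1 → lam i ≤ lam j)
    (hlt : ∀ j, 1 ≤ j → j ≤ k → lam j < lam (k + 1))
    (hyang : ∑ j ∈ Finset.Icc 1 k,
      (lam (k + 1) - lam j) * (lam (k + 1) - (1 + 4 / d) * lam j) ≤ 0) :
    d / 4 ≤ (1 / (k : ℝ)) * ∑ j ∈ Finset.Icc 1 k, lam j / (lam (k + 1) - lam j) := by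
  set a : ℕ → ℝ := fun j => lam (k + 1) - lam j with ha
  have hapos : ∀ j ∈ Finset.Icc 1 k, 0 < a j := by
    intro j hj
    rw [Finset.mem_Icc] at hj
    have := hlt j hj.1 hj.2
    simp [ha]; linarith
  have hlampos : ∀ j ∈ Finset.Icc 1 k, 0 < lam j := by
    intro j hj
    rw [Finset.mem_Icc] at hj
    exact lt_of_lt_of_le hpos (hmono 1 j le_rfl hj.1 (by omega))
  -- Yang rewritten: ∑ a j ^ 2 ≤ (4/d) * ∑ a j * lam j
  have hyang' : ∑ j ∈ Finset.Icc 1 k, a j ^ 2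
      ≤ (4 / d) * ∑ j ∈ Finset.Icc 1 k, a j * lam j := by
    have : ∑ j ∈ Finset.Icc 1 k,
        (lam (k + 1) - lam j) * (lam (k + 1) - (1 + 4 / d) * lam j)
        = ∑ j ∈ Finset.Icc 1 k, (a j ^ 2 - (4 / d) * (a j * lam j)) := by
      refine Finset.sum_congr rfl fun j hj => ?_
      simp only [ha]; ring
    rw [this, Finset.sum_sub_distrib, ← Finset.mul_sum] at hyang
    linarith
  -- Chebyshev
  have hanti : AntivaryOn (fun j => (a j) ^ 2) (fun j => lam j / a j)
      (Finset.Icc 1 k : Finset ℕ) := by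
    intro i hi j hj hgij
    simp only [Finset.coe_Icc, Set.mem_Icc] at hi hj
    have hai := hapos i (Finset.mem_Icc.mpr hi)
    have haj := hapos j (Finset.mem_Icc.mpr hj)
    have hli := hlampos i (Finset.mem_Icc.mpr hi)
    -- show lam i ≤ lam j
    have hlij : lam i ≤ lam j := by
      by_contra h
      push_neg at h
      have hle : lam j ≤ lam i := le_of_lt h
      have : lam j / a j ≤ lam i / a i := by
        apply div_le_div₀ hli.le hle hai
        simp only [ha]; linarith
      exact absurd hgij (not_lt.mpr this)
    have haji : a j ≤ a i := by simp only [ha]; linarith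
    exact pow_le_pow_left₀ haj.le haji 2
  have hcheb := hanti.card_mul_sum_le_sum_mul_sum
  have hcard : (Finset.Icc 1 k).card = k := by simp
  have hprod : ∑ j ∈ Finset.Icc 1 k, (a j) ^ 2 * (lam j / a j)
      = ∑ j ∈ Finset.Icc 1 k, a j * lam j := by
    refine Finset.sum_congr rfl fun j hj => ?_
    have := (hapos j hj).ne'
    field_simp
  rw [hcard, hprod] at hcheb
  have hUpos : 0 < ∑ j ∈ Finset.Icc 1 k, a j * lam j := by
    apply Finset.sum_pos
    · intro j hj; exact mul_pos (hapos j hj) (hlampos j hj)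
    · exact Finset.nonempty_Icc.mpr hk
  set U := ∑ j ∈ Finset.Icc 1 k, a j * lam j
  set T := ∑ j ∈ Finset.Icc 1 k, lam j / a j
  set S := ∑ j ∈ Finset.Icc 1 k, (a j) ^ 2
  have hT : 0 ≤ T := by
    apply Finset.sum_nonneg
    intro j hj
    exact div_nonneg (hlampos j hj).le (hapos j hj).le
  -- k * U ≤ S * T ≤ (4/d) * U * T
  have h1 : (k : ℝ) * U ≤ (4 / d) * U * T :=
    hcheb.trans (mul_le_mul_of_nonneg_right hyang' hT)
  have hk' : (1 : ℝ) ≤ (k : ℝ) := by exact_mod_cast hk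
  have h2 : (k : ℝ) ≤ (4 / d) * T := le_of_mul_le_mul_right (by nlinarith) hUpos
  have hkpos : (0:ℝ) < k := by linarith
  have h3 : (k:ℝ) * d ≤ 4 * T := by
    have := mul_le_mul_of_nonneg_right h2 hd.le
    have h4 : (4 / d * T) * d = 4 * T := by field_simp
    linarith
  rw [show (1/(k:ℝ))*T = T/k by ring, div_le_div_iff₀ (by norm_num : (0:ℝ) < 4) hkpos]
  linarith
end

section
/- Let d ≥ 2 be an integer, v_d := π^{d/2}/Γ(1 + d/2), let L > 0 and λ > 0, and let w : [0, L] → ℝ be a continuously differentiable, nonnegative, nonincreasing function with w(L) = 0 satisfying, for all s ∈ (0, L), the integro-differential inequality −w′(s) ≤ d^{−2} · v_d^{−2/d} · λ · s^{−2+2/d} · ∫_0^s w(t) dt. Then d² · v_d^{2/d} · ∫_0^L w′(s)² · s^{2−2/d} ds ≤ λ · ∫_0^L w(s)² ds. -/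
open Real intervalIntegral MeasureTheory

/-- The weighted Dirichlet energy of a function satisfying the rearrangement
integro-differential inequality is bounded by `λ` times its `L²` norm. -/
theorem stmt_11 (d : ℕ) (hd : 2 ≤ d)
    (vd : ℝ) (hvd : vd = Real.pi ^ ((d : ℝ) / 2) / Real.Gamma (1 + (d : ℝ) / 2))
    (L lam : ℝ) (hL : 0 < L) (hlam : 0 < lam)
    (w w' : ℝ → ℝ)
    (hderiv : ∀ s ∈ Set.Icc (0 : ℝ) L, HasDerivAt w (w' s) s)
    (hw'cont : ContinuousOn w' (Set.Icc 0 L))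
    (hnonneg : ∀ s ∈ Set.Icc (0 : ℝ) L, 0 ≤ w s)
    (hanti : AntitoneOn w (Set.Icc 0 L))
    (hwL : w L = 0)
    (hineq : ∀ s ∈ Set.Ioo (0 : ℝ) L,
      -w' s ≤ ((d : ℝ) ^ 2)⁻¹ * vd ^ (-(2 : ℝ) / d) * lam * s ^ (-2 + 2 / (d : ℝ)) *
        ∫ τ in (0 : ℝ)..s, w τ) :
    (d : ℝ) ^ 2 * vd ^ ((2 : ℝ) / d) * ∫ s in (0 : ℝ)..L, (w' s) ^ 2 * s ^ (2 - 2 / (d : ℝ)) ≤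
      lam * ∫ s in (0 : ℝ)..L, (w s) ^ 2 := by
  have hd0 : (0:ℝ) < (d:ℝ) := by positivity
  have huIcc : Set.uIcc (0:ℝ) L = Set.Icc 0 L := Set.uIcc_of_le hL.le
  have hvd0 : 0 < vd := by
    rw [hvd]
    have h1 : 0 < Real.Gamma (1 + (d:ℝ)/2) := Real.Gamma_pos_of_pos (by positivity)
    positivity
  have hc2 : 0 < 2 - 2/(d:ℝ) := by
    have : 2/(d:ℝ) ≤ 1 := by
      rw [div_le_one hd0]
      exact_mod_cast hd
    linarith
  have hwca : ∀ x ∈ Set.Icc (0:ℝ) L, ContinuousAt w x := fun x hx =>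
    (hderiv x hx).continuousAt
  -- extension of `w` to a continuous function on ℝ
  set p : ℝ → ℝ := fun x => max 0 (min L x) with hp
  have hpmem : ∀ x, p x ∈ Set.Icc (0:ℝ) L := fun x =>
    ⟨le_max_left _ _, max_le hL.le (min_le_left _ _)⟩
  have hpeq : ∀ x ∈ Set.Icc (0:ℝ) L, p x = x := fun x hx => by
    simp [hp, min_eq_right hx.2, max_eq_right hx.1]
  set g : ℝ → ℝ := fun x => w (p x) with hgdef
  have hpcont : Continuous p := continuous_const.max (continuous_const.min continuous_id)
  have hgcont : Continuous g := by
    rw [continuous_iff_continuousAt]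
    intro x
    exact (hwca (p x) (hpmem x)).comp hpcont.continuousAt
  have hgeq : ∀ x ∈ Set.Icc (0:ℝ) L, g x = w x := fun x hx => by
    rw [hgdef]; simp only [hpeq x hx]
  -- the primitive
  set V : ℝ → ℝ := fun x => ∫ t in (0:ℝ)..x, g t with hVdef
  have hV : ∀ x : ℝ, HasDerivAt V (g x) x := fun x =>
    (intervalIntegral.integral_hasStrictDerivAt_right
      (hgcont.intervalIntegrable _ _) (hgcont.stronglyMeasurableAtFilter _ _)
      hgcont.continuousAt).hasDerivAt
  have hVcont : Continuous V := by
    rw [continuous_iff_continuousAt]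
    exact fun x => (hV x).continuousAt
  have hVeq : ∀ x ∈ Set.Icc (0:ℝ) L, V x = ∫ τ in (0:ℝ)..x, w τ := by
    intro x hx
    refine intervalIntegral.integral_congr fun t ht => ?_
    rw [Set.uIcc_of_le hx.1] at ht
    exact hgeq t ⟨ht.1, ht.2.trans hx.2⟩
  -- integration by parts : ∫ (w s)^2 = - ∫ w' s * V s
  have hwInt : IntervalIntegrable w' volume 0 L := by
    apply ContinuousOn.intervalIntegrable; rwa [huIcc]
  have hparts : ∫ s in (0:ℝ)..L, w s * g s =
      w L * V L - w 0 * V 0 - ∫ s in (0:ℝ)..L, w' s * V s := by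
    refine intervalIntegral.integral_mul_deriv_eq_deriv_mul ?_ ?_ hwInt
      (hgcont.intervalIntegrable _ _)
    · intro x hx; exact hderiv x (huIcc ▸ hx)
    · intro x _; exact hV x
  have hV0 : V 0 = 0 := by simp [hVdef]
  have hsq : ∫ s in (0:ℝ)..L, w s * g s = ∫ s in (0:ℝ)..L, (w s)^2 := by
    refine intervalIntegral.integral_congr fun t ht => ?_
    rw [huIcc] at ht
    rw [hgeq t ht]; ring
  have hkey0 : ∫ s in (0:ℝ)..L, (w s)^2 = ∫ s in (0:ℝ)..L, -w' s * V s := by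
    rw [← hsq, hparts, hwL, hV0]
    have : ∫ s in (0:ℝ)..L, -w' s * V s = -∫ s in (0:ℝ)..L, w' s * V s := by
      simp [neg_mul, intervalIntegral.integral_neg]
    rw [this]; ring
  -- sign of w'
  have hw'nonpos : ∀ s ∈ Set.Ioo (0:ℝ) L, w' s ≤ 0 := by
    intro s hs
    have hds := hderiv s ⟨hs.1.le, hs.2.le⟩
    have htend : Filter.Tendsto (slope w s) (nhdsWithin s (Set.Ioi s)) (nhds (w' s)) :=
      (hasDerivAt_iff_tendsto_slope.mp hds).mono_left
        (nhdsWithin_mono s fun y hy => ne_of_gt hy)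
    refine le_of_tendsto htend ?_
    filter_upwards [Ioo_mem_nhdsGT_of_mem ⟨le_refl s, hs.2⟩] with y hy
    rw [slope_def_field]
    apply div_nonpos_of_nonpos_of_nonneg
    · have := hanti ⟨hs.1.le, hs.2.le⟩ ⟨hs.1.le.trans hy.1.le, hy.2.le⟩ hy.1.le
      linarith
    · linarith [hy.1]
  -- the pointwise inequality
  set C : ℝ := ((d:ℝ)^2)⁻¹ * vd ^ (-(2:ℝ)/d) with hC
  have hkey : ∀ s ∈ Set.Ioo (0:ℝ) L,
      (w' s)^2 * s ^ (2 - 2/(d:ℝ)) ≤ C * lam * (-w' s * V s) := by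
    intro s hs
    have hs0 : (0:ℝ) < s := hs.1
    have h1 : -w' s ≤ C * lam * s ^ (-2 + 2/(d:ℝ)) * V s := by
      rw [hVeq s ⟨hs.1.le, hs.2.le⟩]
      exact hineq s hs
    have hw'0 : 0 ≤ -w' s := by linarith [hw'nonpos s hs]
    have hsp : (0:ℝ) ≤ s ^ (2 - 2/(d:ℝ)) := Real.rpow_nonneg hs0.le _
    calc (w' s)^2 * s ^ (2 - 2/(d:ℝ)) = (-w' s) * ((-w' s) * s ^ (2 - 2/(d:ℝ))) := by ring
      _ ≤ (-w' s) * (C * lam * s ^ (-2 + 2/(d:ℝ)) * V s * s ^ (2 - 2/(d:ℝ))) := by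
          apply mul_le_mul_of_nonneg_left _ hw'0
          exact mul_le_mul_of_nonneg_right h1 hsp
      _ = C * lam * (-w' s * V s) * (s ^ (-2 + 2/(d:ℝ)) * s ^ (2 - 2/(d:ℝ))) := by ring
      _ = C * lam * (-w' s * V s) := by
          rw [← Real.rpow_add hs0]
          norm_num
  -- integrability of both sides
  have hrpc : Continuous fun s : ℝ => s ^ (2 - 2/(d:ℝ)) := Real.continuous_rpow_const hc2.le
  have hInt1 : IntervalIntegrable (fun s => (w' s)^2 * s ^ (2 - 2/(d:ℝ))) volume 0 L := by
    apply ContinuousOn.intervalIntegrable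
    rw [huIcc]
    exact ((hw'cont.pow 2).mul hrpc.continuousOn)
  have hInt2 : IntervalIntegrable (fun s => C * lam * (-w' s * V s)) volume 0 L := by
    apply ContinuousOn.intervalIntegrable
    rw [huIcc]
    exact continuousOn_const.mul (hw'cont.neg.mul hVcont.continuousOn)
  -- a.e. inequality on the interval
  have hae : (fun s => (w' s)^2 * s ^ (2 - 2/(d:ℝ)))
      ≤ᵐ[volume.restrict (Set.Icc (0:ℝ) L)] fun s => C * lam * (-w' s * V s) := by
    have h0 : ∀ᵐ s ∂(volume : Measure ℝ), s ∉ ({0, L} : Set ℝ) := by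
      exact MeasureTheory.compl_mem_ae_iff.mpr (((Set.finite_singleton L).insert 0).measure_zero _)
    filter_upwards [MeasureTheory.ae_restrict_mem measurableSet_Icc,
      MeasureTheory.ae_mono Measure.restrict_le_self h0] with s hs hs'
    rcases eq_or_lt_of_le hs.1 with h|h
    · subst h
      have : (0:ℝ) ^ (2 - 2/(d:ℝ)) = 0 := Real.zero_rpow (by linarith)
      simp [this]
      exact absurd (Or.inl rfl) hs'
    rcases eq_or_lt_of_le hs.2 with h2|h2
    · exact absurd (Or.inr h2) hs'
    exact hkey s ⟨h, h2⟩
  have hmono : ∫ s in (0:ℝ)..L, (w' s)^2 * s ^ (2 - 2/(d:ℝ))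
      ≤ ∫ s in (0:ℝ)..L, C * lam * (-w' s * V s) :=
    intervalIntegral.integral_mono_ae_restrict hL.le hInt1 hInt2 hae
  have hconstmul : ∫ s in (0:ℝ)..L, C * lam * (-w' s * V s)
      = C * lam * ∫ s in (0:ℝ)..L, -w' s * V s := by
    rw [← intervalIntegral.integral_const_mul]
  have hfin : ∫ s in (0:ℝ)..L, C * lam * (-w' s * V s)
      = C * lam * ∫ s in (0:ℝ)..L, (w s)^2 := by
    rw [hconstmul, hkey0]
  -- conclude
  have hK : (0:ℝ) < (d:ℝ)^2 * vd ^ ((2:ℝ)/d) := by positivity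
  have hKC : (d:ℝ)^2 * vd ^ ((2:ℝ)/d) * C = 1 := by
    rw [hC]
    have : vd ^ ((2:ℝ)/d) * vd ^ (-(2:ℝ)/d) = 1 := by
      rw [← Real.rpow_add hvd0, show (2:ℝ)/d + -2/d = 0 by ring, Real.rpow_zero]
    field_simp
    rw [neg_div] at this
    nlinarith [this, Real.rpow_pos_of_pos hvd0 ((2:ℝ)/d)]
  calc (d:ℝ)^2 * vd ^ ((2:ℝ)/d) * ∫ s in (0:ℝ)..L, (w' s)^2 * s ^ (2 - 2/(d:ℝ))
      ≤ (d:ℝ)^2 * vd ^ ((2:ℝ)/d) * (C * lam * ∫ s in (0:ℝ)..L, (w s)^2) := by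
        rw [← hfin]
        exact mul_le_mul_of_nonneg_left (hfin ▸ hmono) hK.le
    _ = ((d:ℝ)^2 * vd ^ ((2:ℝ)/d) * C) * (lam * ∫ s in (0:ℝ)..L, (w s)^2) := by ring
    _ = lam * ∫ s in (0:ℝ)..L, (w s)^2 := by rw [hKC, one_mul]
end
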